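/- Let 0 < ε < π and let K̄_ε be the infinite-order scaled kernel. Then K̄_ε has compact support inside the periodic interval: K̄_ε(θ) = 0 for every real θ with ε < |θ| ≤ π. -/

import Mathlib

open Real hiding sinc abs_sinc_le_one sinc_le_one
open MeasureTheory

/-- The sinc function: `sinc x = sin x / x` for `x ≠ 0` and `sinc 0 = 1`. -/
noncomputable def sinc (x : ℝ) : ℝ := if x = 0 then 1 else Real.sin x / x

/-- The Fourier coefficient `c_k(ε) = ∏_{n=1}^∞ sinc(kε/2^n)` of the
infinite-order scaled kernel. -/
noncomputable def infKernelCoeff (ε : ℝ) (k : ℕ) : ℝ :=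
  ∏' n : ℕ, sinc ((k : ℝ) * ε / 2 ^ (n + 1))

/-- The infinite-order scaled kernel with range `ε`:
`K̄_ε(θ) = 1/(2π) + (1/π) Σ_{k=1}^∞ c_k(ε) cos(kθ)`. -/
noncomputable def infKernel (ε : ℝ) (θ : ℝ) : ℝ :=
  1 / (2 * Real.pi) +
    (1 / Real.pi) * ∑' k : ℕ, infKernelCoeff ε (k + 1) * Real.cos ((k + 1 : ℝ) * θ)

lemma sinc_of_ne {x : ℝ} (hx : x ≠ 0) : sinc x = Real.sin x / x := if_neg hx

lemma abs_sinc_le_one (x : ℝ) : |sinc x| ≤ 1 := by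
  rcases eq_or_ne x 0 with h | h
  · simp [sinc, h]
  · rw [sinc_of_ne h, abs_div]
    rw [div_le_one (abs_pos.mpr h)]
    exact Real.abs_sin_le_abs

lemma abs_sinc_le_inv {x : ℝ} (hx : x ≠ 0) : |sinc x| ≤ |x|⁻¹ := by
  rw [sinc_of_ne hx, abs_div, div_eq_mul_inv]
  have := abs_pos.mpr hx
  have h1 : |Real.sin x| ≤ 1 := abs_sin_le_one x
  nlinarith [abs_nonneg (Real.sin x), inv_pos.mpr this]

lemma abs_sin_sub_self (x : ℝ) : |Real.sin x - x| ≤ |x| * (x ^ 2 / 2) := by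
  have hint : ∫ t in (0:ℝ)..x, (Real.cos t - 1) = Real.sin x - x := by
    rw [intervalIntegral.integral_sub (Real.continuous_cos.intervalIntegrable 0 x)
      intervalIntegrable_const]
    simp [integral_cos]
  rw [← hint]
  have := intervalIntegral.norm_integral_le_of_norm_le_const (C := x ^ 2 / 2)
    (f := fun t => Real.cos t - 1) (a := 0) (b := x) ?_
  · simpa [Real.norm_eq_abs, abs_mul, mul_comm] using this
  · intro t ht
    have htx : t ^ 2 ≤ x ^ 2 := by
      rcases Set.mem_uIoc.mp ht with h | h
      · nlinarith [h.1, h.2]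
      · nlinarith [h.1, h.2]
    have h1 : 1 - t ^ 2 / 2 ≤ Real.cos t := Real.one_sub_sq_div_two_le_cos
    have h2 : Real.cos t ≤ 1 := Real.cos_le_one t
    rw [Real.norm_eq_abs, abs_le]
    constructor <;> nlinarith

lemma abs_sinc_sub_one (x : ℝ) : |sinc x - 1| ≤ x ^ 2 / 2 := by
  rcases eq_or_ne x 0 with h | h
  · simp [sinc, h]
  · rw [sinc_of_ne h]
    have hx := abs_pos.mpr h
    have := abs_sin_sub_self x
    have heq : Real.sin x / x - 1 = (Real.sin x - x) / x := by field_simp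
    rw [heq, abs_div, div_le_iff₀ hx]
    linarith [this]

lemma sinc_le_one (x : ℝ) : sinc x ≤ 1 := le_trans (le_abs_self _) (abs_sinc_le_one x)

lemma sinc_pos {x : ℝ} (h0 : 0 < x) (hpi : x < Real.pi) : 0 < sinc x := by
  rw [sinc_of_ne (ne_of_gt h0)]
  exact div_pos (Real.sin_pos_of_pos_of_lt_pi h0 hpi) h0

lemma hasProd_exp {l : ℕ → ℝ} {s : ℝ} (h : HasSum l s) :
    HasProd (fun n => Real.exp (l n)) (Real.exp s) := by
  have h2 := (Real.continuous_exp.continuousAt (x := s)).tendsto.comp h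
  apply h2.congr
  intro t
  simp [Function.comp, Real.exp_sum]

lemma multipliable_sinc (a : ℝ) (ha : 0 < a) :
    Multipliable (fun n : ℕ => sinc (a / 2 ^ (n + 1))) := by
  obtain ⟨m, hm⟩ := pow_unbounded_of_one_lt a (one_lt_two (α := ℝ))
  apply Multipliable.comp_nat_add (k := m)
  have key : ∀ n : ℕ, 0 < a / 2 ^ (n + m + 1) ∧ a / 2 ^ (n + m + 1) ≤ 1 := by
    intro n
    refine ⟨by positivity, ?_⟩
    rw [div_le_one (by positivity)]
    have h2 : (2:ℝ) ^ m ≤ 2 ^ (n + m + 1) := by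
      apply pow_le_pow_right₀ one_le_two; omega
    linarith
  have hpos : ∀ n : ℕ, 0 < sinc (a / 2 ^ (n + m + 1)) := by
    intro n
    obtain ⟨h1, h2⟩ := key n
    exact sinc_pos h1 (lt_of_le_of_lt h2 (by linarith [Real.pi_gt_three]))
  have heq : (fun n : ℕ => sinc (a / 2 ^ (n + m + 1))) =
      fun n => Real.exp (Real.log (sinc (a / 2 ^ (n + m + 1)))) := by
    funext n; rw [Real.exp_log (hpos n)]
  rw [heq]
  have hsum : Summable (fun n : ℕ => Real.log (sinc (a / 2 ^ (n + m + 1)))) := by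
    apply Summable.of_norm
    have hb : Summable (fun n : ℕ => a ^ 2 * (1 / 4 : ℝ) ^ n) := by
      apply Summable.mul_left
      exact summable_geometric_of_lt_one (by norm_num) (by norm_num)
    apply Summable.of_nonneg_of_le (fun n => norm_nonneg _) _ hb
    intro n
    obtain ⟨h1, h2⟩ := key n
    set y := a / 2 ^ (n + m + 1) with hy
    set x := sinc y with hx
    have hs1 : x ≤ 1 := sinc_le_one y
    have hs2 : |x - 1| ≤ y ^ 2 / 2 := abs_sinc_sub_one y
    have hy2 : y ^ 2 ≤ 1 := by nlinarith
    have hs3 : 1 - y ^ 2 / 2 ≤ x := by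
      have := (abs_le.mp hs2).1; linarith
    have hxpos : 0 < x := hpos n
    have hlog1 : Real.log x ≤ 0 := Real.log_nonpos (le_of_lt hxpos) hs1
    have hlog2 : Real.log x⁻¹ ≤ x⁻¹ - 1 := Real.log_le_sub_one_of_pos (by positivity)
    rw [Real.log_inv] at hlog2
    have hxhalf : (2:ℝ)⁻¹ ≤ x := by linarith
    have hbound : -Real.log x ≤ y ^ 2 := by
      have h4 : x⁻¹ - 1 = (1 - x) / x := by field_simp
      have h5 : (1 - x) / x ≤ 2 * (1 - x) := by
        rw [div_le_iff₀ hxpos]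
        nlinarith
      nlinarith
    have hyn : y ^ 2 ≤ a ^ 2 * (1 / 4 : ℝ) ^ n := by
      rw [hy, div_pow]
      rw [div_le_iff₀ (by positivity)]
      have : ((2:ℝ) ^ (n + m + 1)) ^ 2 = 4 ^ (n + m + 1) := by
        rw [← pow_mul, pow_mul']
        norm_num
      rw [this]
      have h6 : (4:ℝ) ^ n ≤ 4 ^ (n + m + 1) := by
        apply pow_le_pow_right₀ (by norm_num); omega
      have h7 : a ^ 2 * (1 / 4 : ℝ) ^ n * 4 ^ (n + m + 1) = a ^ 2 * (4 ^ (n+m+1) / 4 ^ n) := by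
        rw [div_pow, one_pow]; ring
      rw [h7]
      have h8 : (1:ℝ) ≤ 4 ^ (n+m+1) / 4 ^ n := by
        rw [le_div_iff₀ (by positivity)]; linarith
      nlinarith
    rw [Real.norm_eq_abs, abs_of_nonpos hlog1]
    linarith
  exact (hasProd_exp hsum.hasSum).multipliable

lemma summable_one_div_nat_add_one_sq :
    Summable (fun k : ℕ => 1 / ((k : ℝ) + 1) ^ 2) := by
  have h := Real.summable_one_div_nat_pow.mpr (le_refl 2)
  have h2 := (summable_nat_add_iff (f := fun n : ℕ => 1 / (n : ℝ) ^ 2) 1).mpr h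
  apply h2.congr
  intro n
  push_cast
  ring

lemma Rfun_summable (y : ℝ) :
    Summable (fun k : ℕ => (1 / ((k : ℝ) + 1) ^ 2) * Real.cos (((k : ℝ) + 1) * y)) := by
  apply Summable.of_norm
  apply Summable.of_nonneg_of_le (fun k => norm_nonneg _) _ summable_one_div_nat_add_one_sq
  intro k
  rw [Real.norm_eq_abs, abs_mul]
  have h1 : |Real.cos (((k:ℝ)+1) * y)| ≤ 1 := Real.abs_cos_le_one _
  have h2 : |1 / ((k : ℝ) + 1) ^ 2| = 1 / ((k : ℝ) + 1) ^ 2 := by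
    rw [abs_of_pos]; positivity
  rw [h2]
  nlinarith [abs_nonneg (Real.cos (((k:ℝ)+1) * y)), (by positivity : (0:ℝ) < 1 / ((k:ℝ)+1)^2)]

noncomputable def Rfun (y : ℝ) : ℝ := ∑' k : ℕ, (1 / ((k : ℝ) + 1) ^ 2) * Real.cos (((k : ℝ) + 1) * y)

lemma Rfun_eval {y : ℝ} (h0 : 0 ≤ y) (h2 : y ≤ 2 * π) :
    Rfun y = π ^ 2 / 6 - π * y / 2 + y ^ 2 / 4 := by
  have hπ := Real.pi_pos
  set x : ℝ := y / (2 * π) with hx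
  have hx0 : x ∈ Set.Icc (0:ℝ) 1 := by
    constructor
    · positivity
    · rw [hx, div_le_one (by positivity)]; linarith
  have H := hasSum_one_div_nat_pow_mul_cos (k := 1) one_ne_zero hx0
  have hB : (Polynomial.map (algebraMap ℚ ℝ) (Polynomial.bernoulli 2)).eval x
      = x ^ 2 - x + 1/6 := by
    have hb2 : Polynomial.bernoulli 2 =
        Polynomial.monomial 2 (1 : ℚ) + Polynomial.monomial 1 (-1) + Polynomial.monomial 0 (1/6) := by
      rw [Polynomial.bernoulli]
      rw [Finset.sum_range_succ, Finset.sum_range_succ, Finset.sum_range_one]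
      have hb : bernoulli 2 = 1/6 := by
        rw [bernoulli_eq_bernoulli'_of_ne_one (by norm_num), bernoulli'_two]
      norm_num [bernoulli_zero, bernoulli_one, hb]
    rw [hb2]
    simp [Polynomial.eval_monomial]
    ring
  have H2 : HasSum (fun n : ℕ => 1 / ((n:ℝ)) ^ 2 * Real.cos (n * y))
      (π ^ 2 / 6 - π * y / 2 + y ^ 2 / 4) := by
    have hfn : (fun n : ℕ => 1 / ((n:ℝ)) ^ 2 * Real.cos ((n:ℝ) * y)) =
        (fun n : ℕ => 1 / (n : ℝ) ^ (2 * 1) * Real.cos (2 * π * n * x)) := by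
      funext n
      have harg : 2 * π * (n:ℝ) * x = (n:ℝ) * y := by rw [hx]; field_simp
      rw [harg]
    rw [hfn]
    convert H using 1
    rw [hB, hx]
    have hfac : ((2 * 1).factorial : ℝ) = 2 := by norm_num [Nat.factorial]
    rw [hfac]
    field_simp
    ring
  have H3 := (hasSum_nat_add_iff' (f := fun n : ℕ => 1 / ((n:ℝ)) ^ 2 * Real.cos ((n:ℝ) * y)) 1).mpr H2
  simp only [Finset.sum_range_one, Nat.cast_zero] at H3
  norm_num at H3
  rw [Rfun, ← H3.tsum_eq]
  apply tsum_congr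
  intro k
  rw [one_div]

noncomputable def pprod (N : ℕ) (ε : ℝ) (k : ℕ) : ℝ :=
  ∏ n ∈ Finset.range (N + 2), sinc (((k : ℝ) + 1) * ε / 2 ^ (n + 1))

lemma pprod_abs_le {N : ℕ} {ε : ℝ} (hε : 0 < ε) (k : ℕ) :
    |pprod N ε k| ≤ 8 / (((k : ℝ) + 1) * ε) ^ 2 := by
  set a : ℝ := ((k : ℝ) + 1) * ε with ha
  have hap : 0 < a := by positivity
  rw [pprod, Finset.abs_prod]
  have hsplit : N + 2 = 2 + N := by omega
  rw [hsplit, Finset.prod_range_add]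
  have h1 : ∏ i ∈ Finset.range 2, |sinc (a / 2 ^ (i + 1))| ≤ (2/a) * (4/a) := by
    rw [Finset.prod_range_succ, Finset.prod_range_one]
    have b1 : |sinc (a / 2 ^ (0 + 1))| ≤ 2/a := by
      have := abs_sinc_le_inv (x := a / 2 ^ (0+1)) (by positivity)
      rw [abs_of_pos (by positivity : (0:ℝ) < a / 2 ^ (0+1))] at this
      calc |sinc (a / 2 ^ (0 + 1))| ≤ (a / 2 ^ (0+1))⁻¹ := this
        _ = 2/a := by norm_num
    have b2 : |sinc (a / 2 ^ (1 + 1))| ≤ 4/a := by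
      have := abs_sinc_le_inv (x := a / 2 ^ (1+1)) (by positivity)
      rw [abs_of_pos (by positivity : (0:ℝ) < a / 2 ^ (1+1))] at this
      calc |sinc (a / 2 ^ (1 + 1))| ≤ (a / 2 ^ (1+1))⁻¹ := this
        _ = 4/a := by norm_num
    have := mul_le_mul b1 b2 (abs_nonneg _) (by positivity)
    exact this
  have h2 : ∏ i ∈ Finset.range N, |sinc (a / 2 ^ (2 + i + 1))| ≤ 1 :=
    Finset.prod_le_one (fun i _ => abs_nonneg _) (fun i _ => abs_sinc_le_one _)
  calc (∏ i ∈ Finset.range 2, |sinc (a / 2 ^ (i + 1))|) *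
        ∏ i ∈ Finset.range N, |sinc (a / 2 ^ (2 + i + 1))|
      ≤ ((2/a) * (4/a)) * 1 := by
        apply mul_le_mul h1 h2 (Finset.prod_nonneg (fun i _ => abs_nonneg _)) (by positivity)
    _ = 8 / a ^ 2 := by field_simp; ring

lemma pprod_summable (N : ℕ) {ε : ℝ} (hε : 0 < ε) (θ : ℝ) :
    Summable (fun k : ℕ => pprod N ε k * Real.cos (((k : ℝ) + 1) * θ)) := by
  apply Summable.of_norm
  have hb : Summable (fun k : ℕ => (8 / ε ^ 2) * (1 / ((k : ℝ) + 1) ^ 2)) := by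
    apply Summable.mul_left
    have h := Real.summable_one_div_nat_pow.mpr (le_refl 2)
    have h2 := (summable_nat_add_iff (f := fun n : ℕ => 1 / (n : ℝ) ^ 2) 1).mpr h
    apply h2.congr
    intro n; push_cast; ring
  apply Summable.of_nonneg_of_le (fun k => norm_nonneg _) _ hb
  intro k
  rw [Real.norm_eq_abs, abs_mul]
  have h1 := pprod_abs_le (N := N) hε k
  have h2 : |Real.cos (((k:ℝ)+1) * θ)| ≤ 1 := Real.abs_cos_le_one _
  have h3 : 8 / (((k : ℝ) + 1) * ε) ^ 2 = (8 / ε ^ 2) * (1 / ((k : ℝ) + 1) ^ 2) := by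
    field_simp
  calc |pprod N ε k| * |Real.cos (((k:ℝ)+1) * θ)| ≤ (8 / (((k : ℝ) + 1) * ε) ^ 2) * 1 := by
        apply mul_le_mul h1 h2 (abs_nonneg _) (by positivity)
    _ = (8 / ε ^ 2) * (1 / ((k : ℝ) + 1) ^ 2) := by rw [mul_one, h3]

noncomputable def Sfun (N : ℕ) (ε θ : ℝ) : ℝ :=
  ∑' k : ℕ, pprod N ε k * Real.cos (((k : ℝ) + 1) * θ)

lemma base_term {b ε : ℝ} (θ : ℝ) (hb : 0 < b) (hε : 0 < ε) :
    sinc (b * ε / 2) * sinc (b * ε / 4) * Real.cos (b * θ) =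
      2 / (b ^ 2 * ε ^ 2) *
        (Real.cos (b * (θ + ε/4)) + Real.cos (b * (θ - ε/4))
          - Real.cos (b * (θ + 3*ε/4)) - Real.cos (b * (θ - 3*ε/4))) := by
  have e1 : Real.cos (b * (θ + ε/4)) + Real.cos (b * (θ - ε/4))
      = 2 * Real.cos (b * θ) * Real.cos (b * ε / 4) := by
    rw [mul_add, mul_sub, Real.cos_add, Real.cos_sub]
    ring_nf
  have e2 : Real.cos (b * (θ + 3*ε/4)) + Real.cos (b * (θ - 3*ε/4))
      = 2 * Real.cos (b * θ) * Real.cos (3 * (b * ε / 4)) := by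
    rw [mul_add, mul_sub, Real.cos_add, Real.cos_sub]
    ring_nf
  have e3 : Real.cos (b * ε / 4) - Real.cos (3 * (b * ε / 4))
      = 2 * Real.sin (b * ε / 2) * Real.sin (b * ε / 4) := by
    rw [Real.cos_sub_cos]
    have h1 : (b * ε / 4 + 3 * (b * ε / 4)) / 2 = b * ε / 2 := by ring
    have h2 : (b * ε / 4 - 3 * (b * ε / 4)) / 2 = -(b * ε / 4) := by ring
    rw [h1, h2, Real.sin_neg]
    ring
  have key : Real.cos (b * (θ + ε/4)) + Real.cos (b * (θ - ε/4))
      - Real.cos (b * (θ + 3*ε/4)) - Real.cos (b * (θ - 3*ε/4))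
      = 2 * Real.cos (b * θ) * (2 * Real.sin (b * ε / 2) * Real.sin (b * ε / 4)) := by
    rw [← e3]; linarith [e1, e2]
  rw [key, sinc_of_ne (by positivity), sinc_of_ne (by positivity)]
  field_simp
  ring

lemma Sfun_zero {ε θ : ℝ} (hε : 0 < ε) (hεπ : ε < π) (hθ : ε < θ) (hθπ : θ ≤ π) :
    Sfun 0 ε θ = -(1/2) := by
  have hπ := Real.pi_pos
  have hterm : ∀ k : ℕ, pprod 0 ε k * Real.cos (((k : ℝ) + 1) * θ)
      = (2 / ε ^ 2) * ((1 / ((k : ℝ) + 1) ^ 2) * Real.cos (((k : ℝ) + 1) * (θ + ε/4))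
        + (1 / ((k : ℝ) + 1) ^ 2) * Real.cos (((k : ℝ) + 1) * (θ - ε/4))
        - (1 / ((k : ℝ) + 1) ^ 2) * Real.cos (((k : ℝ) + 1) * (θ + 3*ε/4))
        - (1 / ((k : ℝ) + 1) ^ 2) * Real.cos (((k : ℝ) + 1) * (θ - 3*ε/4))) := by
    intro k
    set b : ℝ := (k : ℝ) + 1 with hbdef
    have hb : 0 < b := by positivity
    have hp : pprod 0 ε k = sinc (b * ε / 2) * sinc (b * ε / 4) := by
      rw [pprod, Finset.prod_range_succ, Finset.prod_range_one]
      norm_num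
      rfl
    rw [hp, base_term θ hb hε]
    set c1 := Real.cos (b * (θ + ε/4))
    set c2 := Real.cos (b * (θ - ε/4))
    set c3 := Real.cos (b * (θ + 3*ε/4))
    set c4 := Real.cos (b * (θ - 3*ε/4))
    have hb0 : b ≠ 0 := ne_of_gt hb
    have hε0 : ε ≠ 0 := ne_of_gt hε
    field_simp
  rw [Sfun]
  rw [tsum_congr hterm, tsum_mul_left]
  have s1 := Rfun_summable (θ + ε/4)
  have s2 := Rfun_summable (θ - ε/4)
  have s3 := Rfun_summable (θ + 3*ε/4)
  have s4 := Rfun_summable (θ - 3*ε/4)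
  rw [Summable.tsum_sub (((s1.add s2).sub s3)) s4, Summable.tsum_sub (s1.add s2) s3, Summable.tsum_add s1 s2]
  have hR1 : Rfun (θ + ε/4) = π ^ 2 / 6 - π * (θ + ε/4) / 2 + (θ + ε/4) ^ 2 / 4 :=
    Rfun_eval (by linarith) (by linarith)
  have hR2 : Rfun (θ - ε/4) = π ^ 2 / 6 - π * (θ - ε/4) / 2 + (θ - ε/4) ^ 2 / 4 :=
    Rfun_eval (by linarith) (by linarith)
  have hR3 : Rfun (θ + 3*ε/4) = π ^ 2 / 6 - π * (θ + 3*ε/4) / 2 + (θ + 3*ε/4) ^ 2 / 4 :=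
    Rfun_eval (by linarith) (by linarith)
  have hR4 : Rfun (θ - 3*ε/4) = π ^ 2 / 6 - π * (θ - 3*ε/4) / 2 + (θ - 3*ε/4) ^ 2 / 4 :=
    Rfun_eval (by linarith) (by linarith)
  rw [show (∑' k : ℕ, (1 / ((k : ℝ) + 1) ^ 2) * Real.cos (((k : ℝ) + 1) * (θ + ε/4))) = Rfun (θ + ε/4) from rfl,
    show (∑' k : ℕ, (1 / ((k : ℝ) + 1) ^ 2) * Real.cos (((k : ℝ) + 1) * (θ - ε/4))) = Rfun (θ - ε/4) from rfl,
    show (∑' k : ℕ, (1 / ((k : ℝ) + 1) ^ 2) * Real.cos (((k : ℝ) + 1) * (θ + 3*ε/4))) = Rfun (θ + 3*ε/4) from rfl,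
    show (∑' k : ℕ, (1 / ((k : ℝ) + 1) ^ 2) * Real.cos (((k : ℝ) + 1) * (θ - 3*ε/4))) = Rfun (θ - 3*ε/4) from rfl,
    hR1, hR2, hR3, hR4]
  have hε0 : ε ≠ 0 := ne_of_gt hε
  field_simp
  ring

lemma pprod_succ {N : ℕ} {ε : ℝ} (k : ℕ) :
    pprod (N + 1) ε k = pprod N (ε / 2) k * sinc (((k : ℝ) + 1) * ε / 2) := by
  rw [pprod, pprod]
  rw [show N + 1 + 2 = (N + 2) + 1 from rfl, Finset.prod_range_succ']
  congr 1
  · apply Finset.prod_congr rfl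
    intro n _
    congr 1
    rw [pow_succ]
    ring
  · norm_num

lemma cos_integral (m a b : ℝ) (hm : m ≠ 0) :
    ∫ t in a..b, Real.cos (m * t) = (Real.sin (m * b) - Real.sin (m * a)) / m := by
  have h := intervalIntegral.mul_integral_comp_mul_left (a := a) (b := b) (c := m)
    (f := Real.cos)
  rw [integral_cos] at h
  field_simp
  exact h

lemma Sfun_rec (N : ℕ) {ε : ℝ} (hε : 0 < ε) (θ : ℝ) :
    Sfun (N + 1) ε θ = ε⁻¹ * ∫ t in (θ - ε/2)..(θ + ε/2), Sfun N (ε/2) t := by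
  have hε2 : (0:ℝ) < ε / 2 := by linarith
  have hle : θ - ε/2 ≤ θ + ε/2 := by linarith
  set μ := volume.restrict (Set.Ioc (θ - ε/2) (θ + ε/2)) with hμ
  set F : ℕ → ℝ → ℝ := fun k t => pprod N (ε/2) k * Real.cos (((k : ℝ) + 1) * t) with hF
  have hcont : ∀ k : ℕ, Continuous (F k) := by
    intro k
    exact continuous_const.mul (Real.continuous_cos.comp (continuous_const.mul continuous_id))
  have hint : ∀ k : ℕ, Integrable (F k) μ := by
    intro k
    exact (hcont k).integrableOn_Ioc
  have hbound : ∀ k : ℕ, (∫ t, ‖F k t‖ ∂μ) ≤ (32 / ε) * (1 / ((k : ℝ) + 1) ^ 2) := by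
    intro k
    have h1 : ∀ t, ‖F k t‖ ≤ |pprod N (ε/2) k| := by
      intro t
      rw [hF, Real.norm_eq_abs, abs_mul]
      have := Real.abs_cos_le_one (((k : ℝ) + 1) * t)
      nlinarith [abs_nonneg (pprod N (ε/2) k)]
    have h2 : (∫ t, ‖F k t‖ ∂μ) ≤ ∫ _, |pprod N (ε/2) k| ∂μ := by
      apply integral_mono ((hint k).norm) _ h1
      exact integrable_const _
    have h3 : (∫ _, |pprod N (ε/2) k| ∂μ) = |pprod N (ε/2) k| * ε := by
      rw [hμ, integral_const]
      simp only [measureReal_def, MeasureTheory.Measure.restrict_apply MeasurableSet.univ, Set.univ_inter]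
      rw [Real.volume_Ioc, smul_eq_mul, mul_comm]
      congr 1
      rw [show θ + ε/2 - (θ - ε/2) = ε by ring, ENNReal.toReal_ofReal hε.le]
    have h4 : |pprod N (ε/2) k| * ε ≤ (32 / ε) * (1 / ((k : ℝ) + 1) ^ 2) := by
      have h5 := pprod_abs_le (N := N) hε2 k
      have h6 : 8 / (((k : ℝ) + 1) * (ε/2)) ^ 2 * ε = (32 / ε) * (1 / ((k : ℝ) + 1) ^ 2) := by
        field_simp
        ring
      calc |pprod N (ε/2) k| * ε ≤ 8 / (((k : ℝ) + 1) * (ε/2)) ^ 2 * ε :=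
            mul_le_mul_of_nonneg_right h5 hε.le
        _ = (32 / ε) * (1 / ((k : ℝ) + 1) ^ 2) := h6
    linarith
  have hsummable : Summable (fun k : ℕ => ∫ t, ‖F k t‖ ∂μ) := by
    apply Summable.of_nonneg_of_le
      (fun k => integral_nonneg (fun t => norm_nonneg _)) hbound
    exact (summable_one_div_nat_add_one_sq.mul_left _)
  have hswap := MeasureTheory.integral_tsum_of_summable_integral_norm hint hsummable
  have hkey : ∫ t in (θ - ε/2)..(θ + ε/2), Sfun N (ε/2) t
      = ∑' k : ℕ, ∫ t, F k t ∂μ := by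
    rw [intervalIntegral.integral_of_le hle, hswap]
    rfl
  rw [hkey]
  rw [Sfun, ← tsum_mul_left]
  apply tsum_congr
  intro k
  set m : ℝ := (k : ℝ) + 1 with hm
  have hm0 : m ≠ 0 := by positivity
  have h7 : (∫ t, F k t ∂μ) = pprod N (ε/2) k * ((Real.sin (m * (θ + ε/2)) - Real.sin (m * (θ - ε/2))) / m) := by
    rw [hμ, ← intervalIntegral.integral_of_le hle]
    rw [hF]
    simp only []
    rw [intervalIntegral.integral_const_mul, cos_integral m _ _ hm0]
  rw [h7, pprod_succ]
  have h8 : Real.sin (m * (θ + ε/2)) - Real.sin (m * (θ - ε/2))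
      = 2 * Real.sin (m * ε / 2) * Real.cos (m * θ) := by
    rw [Real.sin_sub_sin]
    congr 2
    · ring
    · ring
  rw [h8, sinc_of_ne (by positivity : m * ε / 2 ≠ 0)]
  field_simp

lemma Sfun_neg (N : ℕ) (ε θ : ℝ) : Sfun N ε (-θ) = Sfun N ε θ := by
  rw [Sfun, Sfun]
  apply tsum_congr
  intro k
  rw [mul_neg, Real.cos_neg]

lemma Sfun_sub_two_pi (N : ℕ) (ε θ : ℝ) : Sfun N ε (θ - 2 * π) = Sfun N ε θ := by
  rw [Sfun, Sfun]
  apply tsum_congr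
  intro k
  congr 1
  have h : ((k : ℝ) + 1) * (θ - 2 * π) = ((k : ℝ) + 1) * θ - ((k + 1 : ℕ) : ℝ) * (2 * π) := by
    push_cast; ring
  rw [h, Real.cos_sub_nat_mul_two_pi]

lemma Sfun_master (N : ℕ) : ∀ {ε θ : ℝ}, 0 < ε → ε < π → ε < θ → θ ≤ π →
    Sfun N ε θ = -(1/2) := by
  induction N with
  | zero => intro ε θ h1 h2 h3 h4; exact Sfun_zero h1 h2 h3 h4
  | succ N ih =>
    intro ε θ h1 h2 h3 h4
    have hπ := Real.pi_pos
    rw [Sfun_rec N h1 θ]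
    have hle : θ - ε/2 ≤ θ + ε/2 := by linarith
    have hval : ∀ t ∈ Set.uIcc (θ - ε/2) (θ + ε/2), Sfun N (ε/2) t = -(1/2) := by
      intro t ht
      rw [Set.uIcc_of_le hle] at ht
      obtain ⟨htl, htr⟩ := ht
      by_cases hcase : t ≤ π
      · exact ih (by linarith) (by linarith) (by linarith) hcase
      · push_neg at hcase
        have e1 : Sfun N (ε/2) t = Sfun N (ε/2) (2 * π - t) := by
          rw [← Sfun_sub_two_pi N (ε/2) t, ← Sfun_neg]
          congr 1
          ring
        rw [e1]
        exact ih (by linarith) (by linarith) (by linarith) (by linarith)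
    rw [intervalIntegral.integral_congr hval]
    rw [intervalIntegral.integral_const]
    rw [smul_eq_mul]
    have : θ + ε/2 - (θ - ε/2) = ε := by ring
    rw [this]
    field_simp

lemma Sfun_tendsto {ε θ : ℝ} (hε : 0 < ε) :
    Filter.Tendsto (fun N => Sfun N ε θ) Filter.atTop
      (nhds (∑' k : ℕ, infKernelCoeff ε (k + 1) * Real.cos ((k + 1 : ℝ) * θ))) := by
  have hb : Summable (fun k : ℕ => (8 / ε ^ 2) * (1 / ((k : ℝ) + 1) ^ 2)) :=
    summable_one_div_nat_add_one_sq.mul_left _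
  apply tendsto_tsum_of_dominated_convergence hb
  · intro k
    have hmul := multipliable_sinc (((k : ℝ) + 1) * ε) (by positivity)
    have ht := hmul.hasProd.tendsto_prod_nat
    have ht2 := ht.comp (Filter.tendsto_add_atTop_nat 2)
    have hcoeff : infKernelCoeff ε (k + 1) = ∏' n : ℕ, sinc (((k : ℝ) + 1) * ε / 2 ^ (n + 1)) := by
      rw [infKernelCoeff]
      push_cast
      rfl
    have harg : ((k + 1 : ℝ)) = ((k : ℝ) + 1) := by push_cast; ring
    rw [harg, hcoeff]
    exact ht2.mul_const _
  · apply Filter.Eventually.of_forall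
    intro N k
    rw [Real.norm_eq_abs, abs_mul]
    have h1 := pprod_abs_le (N := N) hε k
    have h2 : |Real.cos (((k:ℝ)+1) * θ)| ≤ 1 := Real.abs_cos_le_one _
    have h3 : 8 / (((k : ℝ) + 1) * ε) ^ 2 = (8 / ε ^ 2) * (1 / ((k : ℝ) + 1) ^ 2) := by
      field_simp
    calc |pprod N ε k| * |Real.cos (((k:ℝ)+1) * θ)| ≤ (8 / (((k : ℝ) + 1) * ε) ^ 2) * 1 :=
          mul_le_mul h1 h2 (abs_nonneg _) (by positivity)
      _ = (8 / ε ^ 2) * (1 / ((k : ℝ) + 1) ^ 2) := by rw [mul_one, h3]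

/-- For `0 < ε < π`, the infinite-order scaled kernel `K̄_ε` has compact
support inside the periodic interval: `K̄_ε(θ) = 0` whenever `ε < |θ| ≤ π`. -/
theorem stmt_11 (ε : ℝ) (hε : 0 < ε) (hεπ : ε < Real.pi) (θ : ℝ)
    (h1 : ε < |θ|) (h2 : |θ| ≤ Real.pi) :
    infKernel ε θ = 0 := by
  have hπ := Real.pi_pos
  have hSconst : ∀ N : ℕ, Sfun N ε θ = -(1/2) := by
    intro N
    rcases le_or_gt 0 θ with h | h
    · rw [abs_of_nonneg h] at h1 h2
      exact Sfun_master N hε hεπ h1 h2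
    · rw [abs_of_neg h] at h1 h2
      rw [← Sfun_neg N ε θ]
      exact Sfun_master N hε hεπ h1 h2
  have hlim := Sfun_tendsto (θ := θ) hε
  have hconst : Filter.Tendsto (fun N : ℕ => Sfun N ε θ) Filter.atTop (nhds (-(1/2))) := by
    simp only [hSconst]
    exact tendsto_const_nhds
  have htsum : (∑' k : ℕ, infKernelCoeff ε (k + 1) * Real.cos ((k + 1 : ℝ) * θ)) = -(1/2) :=
    tendsto_nhds_unique hlim hconst
  rw [infKernel, htsum]
  field_simp
  ring
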